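/- arXiv:1512.00420 — 2 statements merged into one kernel-verified Lean document; each statement's English description precedes it below -/
import Mathlib

section
/- Let K be a field of characteristic zero equipped with a surjective discrete valuation ord : K^× → ℤ, a chosen uniformizer ϖ, and angular component maps ac_e. Let n ≥ 2 and let x_1, …, x_n ∈ K be pairwise distinct, and set y = (x_1 + ⋯ + x_n)/n. Then there exist an integer e ≥ 1 and indices i ≠ j such that ac_e(x_i − y) ≠ ac_e(x_j − y). -/
/-!
STATEMENT 0: Let `K` be a field of characteristic zero, equipped with a surjective
discrete valuation `ord : K^× → ℤ` (extended by `ord 0 = ∞`, here valued in `WithTop ℤ`),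
a chosen uniformizer `ϖ`, and angular component maps `ac_e : K → R_e = O_K/M_K^e`,
`ac_e x = ϖ^{−ord x} x mod M_K^e` for `x ≠ 0`, `ac_e 0 = 0`.  The residue rings and
angular components are axiomatized by their characteristic properties: `ac_e 0 = 0`,
`ac_e x ≠ 0` for `x ≠ 0` (and `e ≥ 1`), and for nonzero `a, b`,
`ac_e a = ac_e b ↔ ord (ϖ^{−ord a} a − ϖ^{−ord b} b) ≥ e`.
If `n ≥ 2` and `x_1, …, x_n ∈ K` are pairwise distinct and `y = (x_1 + ⋯ + x_n)/n`,
then there are `e ≥ 1` and `i ≠ j` with `ac_e (x_i − y) ≠ ac_e (x_j − y)`.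
-/

theorem statement0
    {K : Type*} [Field K] [CharZero K]
    -- the valuation, extended by `ord 0 = ∞`
    (ord : K → WithTop ℤ)
    (ord_zero : ord 0 = ⊤)
    (ord_ne_top : ∀ x : K, x ≠ 0 → ord x ≠ ⊤)
    (ord_mul : ∀ x y : K, ord (x * y) = ord x + ord y)
    (ord_add : ∀ x y : K, min (ord x) (ord y) ≤ ord (x + y))
    (ord_surj : ∀ k : ℤ, ∃ x : K, ord x = (k : WithTop ℤ))
    -- the chosen uniformizer
    (ϖ : K) (hϖ : ord ϖ = ((1 : ℤ) : WithTop ℤ))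
    -- the residue rings `R_e = O_K / M_K^e` and the angular component maps `ac_e`
    (R : ℕ → Type*) [∀ e, CommRing (R e)]
    (ac : (e : ℕ) → K → R e)
    (ac_zero : ∀ e : ℕ, ac e 0 = 0)
    (ac_ne_zero : ∀ e : ℕ, 1 ≤ e → ∀ x : K, x ≠ 0 → ac e x ≠ 0)
    (ac_eq_iff : ∀ e : ℕ, ∀ a b : K, a ≠ 0 → b ≠ 0 →
      (ac e a = ac e b ↔
        ((e : ℤ) : WithTop ℤ) ≤
          ord (ϖ ^ (-(ord a).untopD 0) * a - ϖ ^ (-(ord b).untopD 0) * b)))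
    -- the data of the statement
    (n : ℕ) (hn : 2 ≤ n) (x : Fin n → K) (hx : Function.Injective x)
    (y : K) (hy : y = (∑ i, x i) / (n : K)) :
    ∃ e : ℕ, 1 ≤ e ∧ ∃ i j : Fin n, i ≠ j ∧ ac e (x i - y) ≠ ac e (x j - y) := by

  classical
  by_contra hcon
  push_neg at hcon
  -- hcon : ∀ e, 1 ≤ e → ∀ i j, i ≠ j → ac e (x i - y) = ac e (x j - y)
  set a : Fin n → K := fun i => x i - y with ha
  have hn0 : (n : K) ≠ 0 := Nat.cast_ne_zero.mpr (by omega)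
  have hϖ0 : ϖ ≠ 0 := by
    intro h
    rw [h, ord_zero] at hϖ
    exact WithTop.coe_ne_top hϖ.symm
  have hord_fin : ∀ z : K, z ≠ 0 → ∃ k : ℤ, ord z = (k : WithTop ℤ) := by
    intro z hz
    rcases WithTop.ne_top_iff_exists.mp (ord_ne_top z hz) with ⟨k, hk⟩
    exact ⟨k, hk.symm⟩
  have hord1 : ord 1 = 0 := by
    have h := ord_mul 1 1
    rw [one_mul] at h
    obtain ⟨k, hk⟩ := hord_fin 1 one_ne_zero
    rw [hk] at h ⊢
    have hk0 : k = k + k := by exact_mod_cast h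
    have : k = 0 := by omega
    rw [this]; rfl
  have hord_neg : ∀ z : K, ord (-z) = ord z := by
    have hm1 : ord (-1 : K) = 0 := by
      have h := ord_mul (-1) (-1)
      rw [neg_mul_neg, one_mul, hord1] at h
      obtain ⟨k, hk⟩ := hord_fin (-1) (by norm_num)
      rw [hk] at h ⊢
      have hk0 : (0 : ℤ) = k + k := by exact_mod_cast h
      have : k = 0 := by omega
      rw [this]; rfl
    intro z
    rw [← neg_one_mul, ord_mul, hm1, zero_add]
  have hzpow : ∀ k : ℤ, ord (ϖ ^ k) = (k : WithTop ℤ) := by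
    have hinv : ord ϖ⁻¹ = ((-1 : ℤ) : WithTop ℤ) := by
      have h := ord_mul ϖ ϖ⁻¹
      rw [mul_inv_cancel₀ hϖ0, hord1, hϖ] at h
      obtain ⟨k, hk⟩ := hord_fin ϖ⁻¹ (inv_ne_zero hϖ0)
      rw [hk] at h ⊢
      have hk0 : (0 : ℤ) = 1 + k := by exact_mod_cast h
      have : k = -1 := by omega
      rw [this]
    intro k
    induction k using Int.induction_on with
    | zero => simpa using hord1
    | succ i ih =>
        rw [zpow_add_one₀ hϖ0, ord_mul, ih, hϖ]
        norm_cast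
    | pred i ih =>
        rw [zpow_sub_one₀ hϖ0, ord_mul, ih, hinv, ← WithTop.coe_add]
        congr 1
  have hstrict : ∀ p q : K, ord p < ord q → ord (p + q) = ord p := by
    intro p q h
    refine le_antisymm ?_ ?_
    · by_contra hle
      push_neg at hle
      have hpq : p = (p + q) + (-q) := by ring
      have h3 : min (ord (p + q)) (ord (-q)) ≤ ord p := by
        conv_rhs => rw [hpq]
        exact ord_add _ _
      rw [hord_neg q] at h3
      exact absurd h3 (not_le.mpr (lt_min hle h))
    · have h2 := ord_add p q
      rwa [min_eq_left h.le] at h2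
  have hsumge : ∀ (s : Finset (Fin n)) (f : Fin n → K) (c : WithTop ℤ),
      (∀ i ∈ s, c ≤ ord (f i)) → c ≤ ord (∑ i ∈ s, f i) := by
    intro s
    induction s using Finset.induction_on with
    | empty => intro f c _; simp [ord_zero]
    | @insert j s hj ih =>
        intro f c hb
        rw [Finset.sum_insert hj]
        refine le_trans (le_min (hb _ (Finset.mem_insert_self _ _))
          (ih f c fun i hi => hb i (Finset.mem_insert_of_mem hi))) (ord_add _ _)
  -- case: some a i = 0
  by_cases hall : ∀ i, a i ≠ 0
  · -- all differences nonzero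
    set m : Fin n → ℤ := fun i => (ord (a i)).untopD 0 with hmdef
    have hm : ∀ i, ord (a i) = ((m i : ℤ) : WithTop ℤ) := by
      intro i
      obtain ⟨k, hk⟩ := hord_fin (a i) (hall i)
      rw [hk]
      simp [hmdef, hk]
    have key : ∀ i j : Fin n, ϖ ^ (-(m i)) * a i = ϖ ^ (-(m j)) * a j := by
      intro i j
      rcases eq_or_ne i j with rfl | hij
      · rfl
      · by_contra hne
        have hz0 : ϖ ^ (-(m i)) * a i - ϖ ^ (-(m j)) * a j ≠ 0 := sub_ne_zero.mpr hne
        obtain ⟨k, hk⟩ := hord_fin _ hz0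
        have h1 := (ac_eq_iff (k.toNat + 1) (a i) (a j) (hall i) (hall j)).mp
          (hcon (k.toNat + 1) (by omega) i j hij)
        have h1' : (((k.toNat + 1 : ℕ) : ℤ) : WithTop ℤ) ≤
            ord (ϖ ^ (-(m i)) * a i - ϖ ^ (-(m j)) * a j) := h1
        rw [hk] at h1'
        have : ((k.toNat + 1 : ℕ) : ℤ) ≤ k := by exact_mod_cast h1'
        omega
    obtain ⟨i0, -, hmin⟩ := Finset.exists_min_image Finset.univ m
      ⟨⟨0, by omega⟩, Finset.mem_univ _⟩
    set u := ϖ ^ (-(m i0)) * a i0 with hu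
    have hu0 : u ≠ 0 := mul_ne_zero (zpow_ne_zero _ hϖ0) (hall i0)
    have hai : ∀ i, a i = ϖ ^ (m i) * u := by
      intro i
      calc a i = ϖ ^ (m i) * (ϖ ^ (-(m i)) * a i) := by
            rw [← mul_assoc, ← zpow_add₀ hϖ0]
            simp
        _ = ϖ ^ (m i) * u := by rw [key i i0]
    have hminj : Function.Injective m := by
      intro i j hij
      have : a i = a j := by rw [hai i, hai j, hij]
      have h3 : x i - y = x j - y := this
      exact hx (by have h4 := congrArg (· + y) h3; simpa using h4)
    have hsume : ∑ i, a i = 0 := by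
      have h1 : ∑ i, a i = (∑ i, x i) - n * y := by
        simp [ha, Finset.sum_sub_distrib, Finset.sum_const, Finset.card_univ,
          nsmul_eq_mul]
      rw [h1, hy]
      field_simp
      ring
    have hS : (∑ i, ϖ ^ (m i)) * u = 0 := by
      rw [Finset.sum_mul, ← hsume]
      exact Finset.sum_congr rfl fun i _ => (hai i).symm
    have hS0 : ∑ i, ϖ ^ (m i) = 0 := by
      rcases mul_eq_zero.mp hS with h | h
      · exact h
      · exact absurd h hu0
    have hsplit : (∑ i, ϖ ^ (m i)) =
        ϖ ^ (m i0) + ∑ i ∈ Finset.univ.erase i0, ϖ ^ (m i) :=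
      (Finset.add_sum_erase _ _ (Finset.mem_univ i0)).symm
    have htail : ((m i0 + 1 : ℤ) : WithTop ℤ) ≤
        ord (∑ i ∈ Finset.univ.erase i0, ϖ ^ (m i)) := by
      apply hsumge
      intro i hi
      rw [hzpow]
      have h1 : m i0 ≤ m i := hmin i (Finset.mem_univ i)
      have h2 : m i ≠ m i0 := fun h => (Finset.mem_erase.mp hi).1 (hminj h)
      exact_mod_cast (by omega : m i0 + 1 ≤ m i)
    have hordS : ord (∑ i, ϖ ^ (m i)) = ((m i0 : ℤ) : WithTop ℤ) := by
      rw [hsplit, hstrict]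
      · exact hzpow _
      · rw [hzpow]
        refine lt_of_lt_of_le ?_ htail
        exact_mod_cast (by omega : m i0 < m i0 + 1)
    rw [hS0, ord_zero] at hordS
    exact WithTop.coe_ne_top hordS.symm
  · push_neg at hall
    obtain ⟨i, hi⟩ := hall
    set j : Fin n := if i = ⟨0, by omega⟩ then ⟨1, by omega⟩ else ⟨0, by omega⟩ with hj
    have hij : j ≠ i := by
      rw [hj]
      split_ifs with h
      · rw [h]
        intro hcontra
        have h5 := congrArg Fin.val hcontra
        simp at h5
      · exact fun hcontra => h hcontra.symm
    have haj : a j ≠ 0 := by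
      intro h
      apply hij
      apply hx
      have h1 : x j = y := by have := h; simpa [ha, sub_eq_zero] using this
      have h2 : x i = y := by have := hi; simpa [ha, sub_eq_zero] using this
      rw [h1, h2]
    have h2 : ac 1 (a j) = ac 1 (a i) := hcon 1 le_rfl j i hij
    rw [hi, ac_zero] at h2
    exact ac_ne_zero 1 le_rfl (a j) haj h2
end

section
/- Let K be as in the context, let Λ', Λ ∈ D with Λ' ⊆ Λ, let x ∈ K^m, and suppose X ⊆ K^m is a local Λ-cone with origin x, i.e. X = C ∩ B(x,α) for some Λ-cone C with origin x and some α ∈ ℤ. Then C_x^{Λ'}(X) = C_x^{Λ}(X). -/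
/-!
STATEMENT 3: `K` as in statement 2 (char-zero field with a surjective discrete
valuation and uniformizer `ϖ`).  Let `Λ', Λ ∈ D` with `Λ' ⊆ Λ`, `x ∈ K^m`, and suppose
`X ⊆ K^m` is a local `Λ`-cone with origin `x`, i.e. `X = C ∩ B(x, α)` for some `Λ`-cone
`C` with origin `x` and some `α ∈ ℤ`.  Then `C_x^{Λ'}(X) = C_x^{Λ}(X)`.
-/

/-- `ord` of a tuple: the minimum of the coordinatewise valuations. -/
def vord {K : Type*} (ord : K → WithTop ℤ) {m : ℕ} (x : Fin m → K) : WithTop ℤ :=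
  Finset.univ.inf fun j => ord (x j)

/-- The subgroup `Λ_{n,m} = {λ ∈ K^× : ac_m(λ) = 1, ord λ ≡ 0 mod n}` of `K^×`. -/
def Lam {K : Type*} [Field K] (ord : K → WithTop ℤ) (ϖ : K) (n m : ℕ) : Set K :=
  {l | l ≠ 0 ∧ ((m : ℤ) : WithTop ℤ) ≤ ord (ϖ ^ (-(ord l).untopD 0) * l - 1) ∧
    (n : ℤ) ∣ (ord l).untopD 0}

/-- The tangent `Λ`-cone of `X ⊆ K^m` at `x`. -/
def tanCone {K : Type*} [Field K] (ord : K → WithTop ℤ) (Λ : Set K) {m : ℕ}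
    (x : Fin m → K) (X : Set (Fin m → K)) : Set (Fin m → K) :=
  {u | ∀ i : ℤ, ∃ y ∈ X, ∃ l ∈ Λ, (i : WithTop ℤ) ≤ vord ord (y - x) ∧
    (i : WithTop ℤ) ≤ vord ord (l • (y - x) - u)}

/-- A `Λ`-cone with origin `x`: stable under `y ↦ x + λ(y − x)` for `λ ∈ Λ`. -/
def IsCone {K : Type*} [Field K] (Λ : Set K) {m : ℕ} (x : Fin m → K)
    (C : Set (Fin m → K)) : Prop :=
  ∀ y ∈ C, ∀ l ∈ Λ, x + l • (y - x) ∈ C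

theorem statement3
    {K : Type*} [Field K] [CharZero K]
    (ord : K → WithTop ℤ)
    (ord_zero : ord 0 = ⊤)
    (ord_ne_top : ∀ x : K, x ≠ 0 → ord x ≠ ⊤)
    (ord_mul : ∀ x y : K, ord (x * y) = ord x + ord y)
    (ord_add : ∀ x y : K, min (ord x) (ord y) ≤ ord (x + y))
    (ord_surj : ∀ k : ℤ, ∃ x : K, ord x = (k : WithTop ℤ))
    (ϖ : K) (hϖ : ord ϖ = ((1 : ℤ) : WithTop ℤ))
    {m : ℕ} (x : Fin m → K) (X : Set (Fin m → K))
    (n₁ m₁ n₂ m₂ : ℕ) (hn₁ : 1 ≤ n₁) (hm₁ : 1 ≤ m₁) (hn₂ : 1 ≤ n₂) (hm₂ : 1 ≤ m₂)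
    (hsub : Lam ord ϖ n₂ m₂ ⊆ Lam ord ϖ n₁ m₁)
    -- `X` is a local `Λ`-cone with origin `x`
    (hX : ∃ (C : Set (Fin m → K)) (α : ℤ), IsCone (Lam ord ϖ n₁ m₁) x C ∧
      X = C ∩ {y | (α : WithTop ℤ) ≤ vord ord (y - x)}) :
    tanCone ord (Lam ord ϖ n₂ m₂) x X = tanCone ord (Lam ord ϖ n₁ m₁) x X := by

  obtain ⟨C, α, hC, rfl⟩ := hX
  -- basic facts about ord
  have hϖ0 : ϖ ≠ 0 := by
    intro h
    rw [h, ord_zero] at hϖ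
    exact (WithTop.coe_ne_top (a := (1 : ℤ))) hϖ.symm
  have ord_one : ord 1 = ((0 : ℤ) : WithTop ℤ) := by
    have h := ord_mul 1 1
    rw [mul_one] at h
    obtain ⟨a, ha⟩ := WithTop.ne_top_iff_exists.mp (ord_ne_top 1 one_ne_zero)
    rw [← ha] at h ⊢
    have h' : a = a + a := by exact_mod_cast h
    have : a = 0 := by omega
    rw [this]
  have ordϖinv : ord ϖ⁻¹ = ((-1 : ℤ) : WithTop ℤ) := by
    have h := ord_mul ϖ ϖ⁻¹
    rw [mul_inv_cancel₀ hϖ0, ord_one, hϖ] at h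
    obtain ⟨b, hb⟩ := WithTop.ne_top_iff_exists.mp (ord_ne_top ϖ⁻¹ (inv_ne_zero hϖ0))
    rw [← hb] at h ⊢
    have h' : (0 : ℤ) = 1 + b := by exact_mod_cast h
    have : b = -1 := by omega
    rw [this]
  have ord_zpow : ∀ k : ℤ, ord (ϖ ^ k) = (k : WithTop ℤ) := by
    intro k
    induction k using Int.induction_on with
    | zero => simpa using ord_one
    | succ i ih =>
        rw [zpow_add₀ hϖ0 _ 1, ord_mul, ih, zpow_one, hϖ]
        exact_mod_cast rfl
    | pred i ih =>
        rw [show -(i : ℤ) - 1 = -(i : ℤ) + (-1) by ring, zpow_add₀ hϖ0, ord_mul, ih,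
          zpow_neg_one, ordϖinv]
        exact_mod_cast rfl
  -- powers of ϖ with divisible exponent are in Lam
  have hpow_mem : ∀ (n' m' : ℕ) (k : ℤ), (n' : ℤ) ∣ k → ϖ ^ k ∈ Lam ord ϖ n' m' := by
    intro n' m' k hk
    refine ⟨zpow_ne_zero _ hϖ0, ?_, ?_⟩
    · rw [ord_zpow k, WithTop.untopD_coe, ← zpow_add₀ hϖ0, neg_add_cancel, zpow_zero,
        sub_self, ord_zero]
      exact le_top
    · rw [ord_zpow k, WithTop.untopD_coe]; exact hk
  have hn12 : (n₁ : ℤ) ∣ (n₂ : ℤ) := by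
    have h := hsub (hpow_mem n₂ m₂ (n₂ : ℤ) dvd_rfl)
    have h' := h.2.2
    rwa [ord_zpow, WithTop.untopD_coe] at h'
  -- vord characterization
  have hvord : ∀ (v : Fin m → K) (i' : ℤ),
      ((i' : ℤ) : WithTop ℤ) ≤ vord ord v ↔ ∀ j, ((i' : ℤ) : WithTop ℤ) ≤ ord (v j) := by
    intro v i'
    simp [vord, Finset.le_inf_iff]
  ext u
  simp only [tanCone, Set.mem_setOf_eq]
  constructor
  · intro h i
    obtain ⟨y, hy, l, hl, h1, h2⟩ := h i
    exact ⟨y, hy, l, hsub hl, h1, h2⟩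
  · intro h i
    obtain ⟨y, hy, l, hl, h1, h2⟩ := h (max i α)
    obtain ⟨hl0, hlac, hldvd⟩ := hl
    obtain ⟨a, ha⟩ := WithTop.ne_top_iff_exists.mp (ord_ne_top l hl0)
    set c : ℤ := a % (n₂ : ℤ) with hcdef
    have hn₂0 : (n₂ : ℤ) ≠ 0 := by exact_mod_cast (by omega : n₂ ≠ 0)
    have hc0 : 0 ≤ c := Int.emod_nonneg a hn₂0
    have h1a : (n₁ : ℤ) ∣ a := by rwa [← ha, WithTop.untopD_coe] at hldvd
    have hcform : c = a - (n₂ : ℤ) * (a / (n₂ : ℤ)) := Int.emod_def a _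
    have hn1c : (n₁ : ℤ) ∣ c := by
      rw [hcform]
      exact dvd_sub h1a (Dvd.dvd.mul_right hn12 _)
    have hn2ac : (n₂ : ℤ) ∣ (a - c) := by
      have : a - c = (n₂ : ℤ) * (a / (n₂ : ℤ)) := by rw [hcform]; ring
      rw [this]; exact Dvd.intro _ rfl
    set μ : K := l * ϖ ^ (c - a) with hμdef
    have hμ0 : μ ≠ 0 := mul_ne_zero hl0 (zpow_ne_zero _ hϖ0)
    have hordμ : ord μ = (c : WithTop ℤ) := by
      rw [hμdef, ord_mul, ← ha, ord_zpow]
      exact_mod_cast congrArg (fun t : ℤ => ((t : WithTop ℤ))) (by ring : a + (c - a) = c)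
    have hμmem : μ ∈ Lam ord ϖ n₁ m₁ := by
      refine ⟨hμ0, ?_, ?_⟩
      · rw [hordμ, WithTop.untopD_coe]
        have hrw : ϖ ^ (-c) * μ = ϖ ^ (-a) * l := by
          rw [hμdef, mul_comm l _, ← mul_assoc, ← zpow_add₀ hϖ0,
            show -c + (c - a) = -a by ring]
        rw [hrw]
        rwa [← ha, WithTop.untopD_coe] at hlac
      · rw [hordμ, WithTop.untopD_coe]; exact hn1c
    have hlamem : ϖ ^ (a - c) ∈ Lam ord ϖ n₂ m₂ := hpow_mem n₂ m₂ _ hn2ac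
    set y' : Fin m → K := x + μ • (y - x) with hy'def
    have hy'x : y' - x = μ • (y - x) := by rw [hy'def]; abel
    have hcoord : ∀ j, ((max i α : ℤ) : WithTop ℤ) ≤ ord (y j - x j) := by
      have hh := (hvord _ _).mp h1
      intro j
      simpa using hh j
    have hy'bound : ∀ β : ℤ, β ≤ max i α → ((β : ℤ) : WithTop ℤ) ≤ vord ord (y' - x) := by
      intro β hβ
      rw [hy'x]
      refine (hvord _ _).mpr fun j => ?_
      have hj : (μ • (y - x)) j = μ * (y j - x j) := rfl
      rw [hj, ord_mul, hordμ]
      calc ((β : ℤ) : WithTop ℤ) ≤ ((max i α : ℤ) : WithTop ℤ) := by exact_mod_cast hβ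
        _ = ((0 : ℤ) : WithTop ℤ) + ((max i α : ℤ) : WithTop ℤ) := by
            rw [← WithTop.coe_add, zero_add]
        _ ≤ (c : WithTop ℤ) + ord (y j - x j) :=
            add_le_add (by exact_mod_cast hc0) (hcoord j)
    have hsmul : (ϖ ^ (a - c)) • (y' - x) = l • (y - x) := by
      rw [hy'x, smul_smul, hμdef, mul_comm l _, ← mul_assoc, ← zpow_add₀ hϖ0,
        show a - c + (c - a) = 0 by ring, zpow_zero, one_mul]
    refine ⟨y', ⟨hC y hy.1 μ hμmem, hy'bound α (le_max_right _ _)⟩, ϖ ^ (a - c), hlamem,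
      hy'bound i (le_max_left _ _), ?_⟩
    rw [hsmul]
    exact le_trans (by exact_mod_cast le_max_left i α) h2
end
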